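/- Let ψ_σ(ξ) = (2π)^{d/2}σ^d e^{-2π²σ²‖ξ‖²} and define the weighted norm N(σ) = ∫_{ℝ^d} (1+‖ξ‖²)^{α/2} |ψ_σ(ξ)|² dξ (the squared H^{α/2}-norm of F⁻¹[ψ_σ]). Then lim_{σ→0⁺} N(σ) = 0 if α < d, equals C_d = (1/2)(d-1)!(2π)^{-d}·2π^{d/2}/Γ(d/2) if α = d, and equals +∞ if α > d. -/

import Mathlib

open MeasureTheory Real Filter
open Set

lemma aux_gauss_integrable (d : ℕ) {b : ℝ} (hb : 0 < b) :
    Integrable (fun v : EuclideanSpace ℝ (Fin d) => rexp (-b * ‖v‖ ^ 2)) := by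
  have h := (GaussianFourier.integrable_cexp_neg_mul_sq_norm_add
    (b := (b : ℂ)) (by simpa using hb) 0 (0 : EuclideanSpace ℝ (Fin d))).norm
  refine h.congr (Filter.Eventually.of_forall fun v => ?_)
  simp [Complex.norm_exp, ← Complex.ofReal_pow]

lemma aux_poly_bound (α : ℝ) (hα : 0 ≤ α) (x : ℝ) (hx : 0 ≤ x) :
    (1 + x) ^ (α / 2) * rexp (-(4 * π ^ 2) * x) ≤
      (Nat.factorial (Nat.ceil (α / 2)) : ℝ) * rexp 1 * rexp (-(2 * π ^ 2) * x) := by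
  set n : ℕ := Nat.ceil (α / 2)
  have h2 : (1 : ℝ) ≤ 1 + x := by linarith
  have h1 : (1 + x) ^ (α / 2) ≤ (1 + x) ^ (n : ℝ) :=
    Real.rpow_le_rpow_of_exponent_le h2 (Nat.le_ceil _)
  rw [Real.rpow_natCast] at h1
  have h3 : (1 + x) ^ n ≤ (Nat.factorial n : ℝ) * rexp (1 + x) := by
    have := Real.pow_div_factorial_le_exp (x := 1 + x) (by linarith) n
    rw [div_le_iff₀ (by positivity)] at this
    linarith [this]
  have hπ : (3:ℝ) < π := Real.pi_gt_three
  calc (1 + x) ^ (α / 2) * rexp (-(4 * π ^ 2) * x)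
      ≤ ((Nat.factorial n : ℝ) * rexp (1 + x)) * rexp (-(4 * π ^ 2) * x) := by
        apply mul_le_mul_of_nonneg_right (h1.trans h3) (Real.exp_nonneg _)
    _ = (Nat.factorial n : ℝ) * rexp 1 * rexp (x + -(4 * π ^ 2) * x) := by
        rw [Real.exp_add, Real.exp_add]; ring
    _ ≤ (Nat.factorial n : ℝ) * rexp 1 * rexp (-(2 * π ^ 2) * x) := by
        apply mul_le_mul_of_nonneg_left _ (by positivity)
        apply Real.exp_le_exp.2
        nlinarith [mul_nonneg hx (show (0:ℝ) ≤ 2 * π ^ 2 - 1 by nlinarith)]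

lemma aux_rpow_alg {σ : ℝ} (hσ : 0 < σ) (d : ℕ) (α : ℝ) :
    ((σ ^ d : ℝ)) ^ 2 * ((σ ^ α)⁻¹ * ((σ ^ d : ℝ))⁻¹) = σ ^ ((d : ℝ) - α) := by
  rw [← Real.rpow_natCast σ d, ← Real.rpow_natCast (σ ^ ((d : ℕ) : ℝ)) 2,
    ← Real.rpow_mul hσ.le, ← Real.rpow_neg hσ.le, ← Real.rpow_neg hσ.le,
    ← Real.rpow_add hσ, ← Real.rpow_add hσ]
  congr 1
  push_cast
  ring


lemma aux_J (d : ℕ) (hd : 1 ≤ d) :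
    ∫ y in Ioi (0:ℝ), y ^ (d - 1) • ((y ^ 2) ^ ((d : ℝ) / 2) * rexp (-(4 * π ^ 2) * y ^ 2))
      = (1 / 2) * ((1 / (4 * π ^ 2)) ^ (d : ℝ) * Real.Gamma d) := by
  have hγ : ∫ t : ℝ in Ioi 0, t ^ ((d:ℝ) - 1) * rexp (-(4 * π ^ 2 * t))
      = (1 / (4 * π ^ 2)) ^ (d:ℝ) * Real.Gamma d := by
    exact_mod_cast Real.integral_rpow_mul_exp_neg_mul_Ioi
      (a := (d:ℝ)) (by exact_mod_cast Nat.pos_of_ne_zero (by omega)) (by positivity)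
  rw [← hγ, ← integral_comp_rpow_Ioi_of_pos
    (g := fun t : ℝ => t ^ ((d:ℝ) - 1) * rexp (-(4 * π ^ 2 * t))) (p := 2) two_pos,
    ← MeasureTheory.integral_const_mul]
  refine setIntegral_congr_fun measurableSet_Ioi fun y hy => ?_
  have hy0 : (0:ℝ) < y := hy
  have hsq : ∀ p : ℝ, ((y ^ 2 : ℝ)) ^ p = y ^ (2 * p) := fun p => by
    rw [← Real.rpow_natCast y 2, ← Real.rpow_mul hy0.le]; norm_num
  have hy2 : y ^ ((2:ℝ)) = y ^ (2:ℕ) := Real.rpow_natCast y 2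
  simp only [smul_eq_mul, hy2, hsq]
  rw [← Real.rpow_natCast y (d-1), show ((2:ℝ) - 1) = 1 by norm_num, Real.rpow_one]
  rw [show ((d - 1 : ℕ) : ℝ) = (d : ℝ) - 1 by push_cast [hd]; ring]
  rw [show (-(4 * π ^ 2 * y ^ 2)) = -(4 * π ^ 2) * y ^ 2 by ring]
  have e1 : y ^ ((d:ℝ) - 1) * y ^ (2 * ((d:ℝ) / 2)) = y * y ^ (2 * ((d:ℝ) - 1)) := by
    rw [← Real.rpow_add hy0]
    have h2 : y * y ^ (2 * ((d:ℝ) - 1)) = y ^ (1 + 2 * ((d:ℝ) - 1)) := by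
      rw [Real.rpow_add hy0, Real.rpow_one]
    rw [h2]; congr 1; ring
  linear_combination rexp (-(4 * π ^ 2) * y ^ 2) * e1



lemma aux_value (d : ℕ) (hd : 1 ≤ d) :
    (2 * π) ^ (d : ℝ) *
      ∫ η : EuclideanSpace ℝ (Fin d), (‖η‖ ^ 2) ^ ((d : ℝ) / 2) * rexp (-(4 * π ^ 2) * ‖η‖ ^ 2)
    = (1 / 2) * (Nat.factorial (d - 1) : ℝ) * (2 * π) ^ (-(d : ℝ)) *
        (2 * π ^ ((d : ℝ) / 2) / Real.Gamma ((d : ℝ) / 2)) := by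
  haveI : Nonempty (Fin d) := Fin.pos_iff_nonempty.1 hd
  haveI : Nontrivial (EuclideanSpace ℝ (Fin d)) :=
    Module.nontrivial_of_finrank_pos (R := ℝ) (by rw [finrank_euclideanSpace_fin]; omega)
  have hint : ∫ η : EuclideanSpace ℝ (Fin d), (‖η‖ ^ 2) ^ ((d : ℝ) / 2) *
      rexp (-(4 * π ^ 2) * ‖η‖ ^ 2)
      = Module.finrank ℝ (EuclideanSpace ℝ (Fin d)) •
        (volume (Metric.ball (0 : EuclideanSpace ℝ (Fin d)) 1)).toReal •
        ∫ y in Ioi (0:ℝ), y ^ (Module.finrank ℝ (EuclideanSpace ℝ (Fin d)) - 1) •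
          ((y ^ 2) ^ ((d : ℝ) / 2) * rexp (-(4 * π ^ 2) * y ^ 2)) :=
    MeasureTheory.integral_fun_norm_addHaar (volume)
      (fun r : ℝ => (r ^ 2) ^ ((d : ℝ) / 2) * rexp (-(4 * π ^ 2) * r ^ 2))
  rw [hint, finrank_euclideanSpace_fin, aux_J d hd]
  have hV : (volume (Metric.ball (0 : EuclideanSpace ℝ (Fin d)) 1)).toReal
      = π ^ ((d : ℝ) / 2) / Real.Gamma ((d : ℝ) / 2 + 1) := by
    rw [EuclideanSpace.volume_ball]
    simp only [Fintype.card_fin, ENNReal.ofReal_one, one_pow, one_mul]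
    rw [ENNReal.toReal_ofReal (by positivity)]
    congr 1
    rw [Real.sqrt_eq_rpow, ← Real.rpow_natCast (π ^ ((1:ℝ)/2)) d, ← Real.rpow_mul pi_pos.le]
    ring_nf
  rw [hV]
  -- Gamma identities
  have hd2 : ((d:ℝ)/2) ≠ 0 := by
    have : (0:ℝ) < d := by exact_mod_cast Nat.pos_of_ne_zero (by omega)
    positivity
  have hΓ1 : Real.Gamma ((d:ℝ)/2 + 1) = ((d:ℝ)/2) * Real.Gamma ((d:ℝ)/2) :=
    Real.Gamma_add_one hd2
  have hΓ2 : Real.Gamma (d:ℝ) = (Nat.factorial (d - 1) : ℝ) := by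
    rw [show ((d:ℝ)) = ((d-1 : ℕ) : ℝ) + 1 by push_cast [hd]; ring]
    exact Real.Gamma_nat_eq_factorial (d-1)
  have h4 : ((1 / (4 * π ^ 2) : ℝ)) ^ (d : ℝ)
      = ((2 * π) ^ (d:ℝ) * (2 * π) ^ (d:ℝ))⁻¹ := by
    rw [show ((1 / (4 * π ^ 2)) : ℝ) = ((2*π) * (2*π))⁻¹ by field_simp; ring,
      Real.inv_rpow (by positivity), Real.mul_rpow (by positivity) (by positivity)]
  have hneg : (2*π) ^ (-(d:ℝ)) = ((2*π) ^ (d:ℝ))⁻¹ := Real.rpow_neg (by positivity) _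
  rw [hΓ1, hΓ2, h4, hneg, nsmul_eq_mul, smul_eq_mul]
  have hP : (0:ℝ) < (2*π) ^ (d:ℝ) := Real.rpow_pos_of_pos (by positivity) _
  have hdpos : (0:ℝ) < d := by exact_mod_cast Nat.pos_of_ne_zero (by omega)
  have hΓpos : (0:ℝ) < Real.Gamma ((d:ℝ)/2) := Real.Gamma_pos_of_pos (by positivity)
  field_simp


/-- Trichotomy for the weighted (squared `H^{α/2}`) norm
`N(σ) = ∫ (1+‖ξ‖²)^{α/2} |ψ_σ(ξ)|² dξ` as `σ → 0⁺`:
it tends to `0` if `α < d`, to `C_d` if `α = d`, and to `+∞` if `α > d`. -/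
theorem sobolev_norm_trichotomy (d : ℕ) (hd : 1 ≤ d) (α : ℝ) (hα : 0 ≤ α)
    (ψ : ℝ → EuclideanSpace ℝ (Fin d) → ℝ)
    (hψ : ∀ σ ξ, ψ σ ξ = (2 * π) ^ ((d : ℝ) / 2) * σ ^ d *
      Real.exp (-2 * π ^ 2 * σ ^ 2 * ‖ξ‖ ^ 2))
    (N : ℝ → ℝ)
    (hN : ∀ σ, N σ = ∫ ξ : EuclideanSpace ℝ (Fin d),
      (1 + ‖ξ‖ ^ 2) ^ (α / 2) * |ψ σ ξ| ^ 2) :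
    (α < d → Tendsto N (nhdsWithin 0 (Set.Ioi 0)) (nhds 0)) ∧
    (α = d → Tendsto N (nhdsWithin 0 (Set.Ioi 0))
      (nhds ((1 / 2) * (Nat.factorial (d - 1) : ℝ) * (2 * π) ^ (-(d : ℝ)) *
        (2 * π ^ ((d : ℝ) / 2) / Real.Gamma ((d : ℝ) / 2))))) ∧
    ((d : ℝ) < α → Tendsto N (nhdsWithin 0 (Set.Ioi 0)) atTop) := by
  haveI : Nonempty (Fin d) := Fin.pos_iff_nonempty.1 hd
  haveI : Nontrivial (EuclideanSpace ℝ (Fin d)) :=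
    Module.nontrivial_of_finrank_pos (R := ℝ) (by rw [finrank_euclideanSpace_fin]; omega)
  set F : ℝ → EuclideanSpace ℝ (Fin d) → ℝ := fun σ η =>
    (σ ^ 2 + ‖η‖ ^ 2) ^ (α / 2) * rexp (-(4 * π ^ 2) * ‖η‖ ^ 2) with hF
  set G : ℝ → ℝ := fun σ => ∫ η, F σ η with hG
  -- continuity
  have hFcont : ∀ σ, Continuous (F σ) := by
    intro σ
    apply Continuous.mul
    · exact (continuous_const.add (continuous_norm.pow 2)).rpow_const
        (fun η => Or.inr (by positivity))
    · exact Real.continuous_exp.comp (continuous_const.mul (continuous_norm.pow 2))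
  have hFnonneg : ∀ σ η, 0 ≤ F σ η := fun σ η =>
    mul_nonneg (Real.rpow_nonneg (by positivity) _) (Real.exp_nonneg _)
  -- dominating function
  set C : ℝ := (Nat.factorial (Nat.ceil (α / 2)) : ℝ) * rexp 1 with hC
  have hdom : ∀ σ ∈ Set.Icc (0:ℝ) 1, ∀ η : EuclideanSpace ℝ (Fin d),
      F σ η ≤ C * rexp (-(2 * π ^ 2) * ‖η‖ ^ 2) := by
    intro σ hσ η
    have h1 : (σ ^ 2 + ‖η‖ ^ 2) ^ (α / 2) ≤ (1 + ‖η‖ ^ 2) ^ (α / 2) := by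
      apply Real.rpow_le_rpow (by positivity) _ (by positivity)
      nlinarith [hσ.1, hσ.2, sq_nonneg ‖η‖]
    calc F σ η ≤ (1 + ‖η‖ ^ 2) ^ (α / 2) * rexp (-(4 * π ^ 2) * ‖η‖ ^ 2) :=
          mul_le_mul_of_nonneg_right h1 (Real.exp_nonneg _)
      _ ≤ C * rexp (-(2 * π ^ 2) * ‖η‖ ^ 2) := aux_poly_bound α hα _ (by positivity)
  have hbound_int : Integrable (fun η : EuclideanSpace ℝ (Fin d) =>
      C * rexp (-(2 * π ^ 2) * ‖η‖ ^ 2)) := by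
    have := (aux_gauss_integrable d (b := 2 * π ^ 2) (by positivity)).const_mul C
    simpa using this
  have hFint : ∀ σ ∈ Set.Icc (0:ℝ) 1, Integrable (F σ) := by
    intro σ hσ
    apply hbound_int.mono' (hFcont σ).aestronglyMeasurable
    exact Eventually.of_forall fun η => by
      rw [Real.norm_of_nonneg (hFnonneg σ η)]; exact hdom σ hσ η
  -- DCT
  have hGlim : Tendsto G (nhdsWithin 0 (Set.Ioi 0)) (nhds (G 0)) := by
    apply MeasureTheory.tendsto_integral_filter_of_dominated_convergence
      (bound := fun η => C * rexp (-(2 * π ^ 2) * ‖η‖ ^ 2))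
    · exact Eventually.of_forall fun σ => (hFcont σ).aestronglyMeasurable
    · have hmem : Set.Ioc (0:ℝ) 1 ∈ nhdsWithin (0:ℝ) (Set.Ioi 0) :=
        Ioc_mem_nhdsGT one_pos
      filter_upwards [hmem] with σ hσ
      exact Eventually.of_forall fun η => by
        rw [Real.norm_of_nonneg (hFnonneg σ η)]
        exact hdom σ ⟨hσ.1.le, hσ.2⟩ η
    · exact hbound_int
    · refine Eventually.of_forall fun η => ?_
      have : ContinuousAt (fun σ : ℝ => F σ η) 0 := by
        apply ContinuousAt.mul _ continuousAt_const
        exact (Real.continuous_rpow_const (by positivity)).continuousAt.comp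
          ((continuous_pow 2).continuousAt.add continuousAt_const)
      exact this.tendsto.mono_left nhdsWithin_le_nhds
  -- key identity
  have hkey : ∀ σ : ℝ, σ ∈ Set.Ioi (0:ℝ) →
      N σ = (2 * π) ^ (d : ℝ) * σ ^ ((d : ℝ) - α) * G σ := by
    intro σ hσ
    have hσ0 : (0:ℝ) < σ := hσ
    have step1 : ∀ ξ : EuclideanSpace ℝ (Fin d),
        (1 + ‖ξ‖ ^ 2) ^ (α / 2) * |ψ σ ξ| ^ 2
        = ((2 * π) ^ (d : ℝ) * (σ ^ d) ^ 2) *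
          ((1 + ‖ξ‖ ^ 2) ^ (α / 2) * rexp (-(4 * π ^ 2) * (σ ^ 2 * ‖ξ‖ ^ 2))) := by
      intro ξ
      rw [hψ, sq_abs, mul_pow, mul_pow]
      have e1 : (((2 * π) ^ ((d : ℝ) / 2)) : ℝ) ^ 2 = (2 * π) ^ (d : ℝ) := by
        rw [← Real.rpow_natCast ((2 * π) ^ ((d : ℝ) / 2)) 2,
          ← Real.rpow_mul (by positivity)]
        norm_num
      have e2 : rexp (-2 * π ^ 2 * σ ^ 2 * ‖ξ‖ ^ 2) ^ 2
          = rexp (-(4 * π ^ 2) * (σ ^ 2 * ‖ξ‖ ^ 2)) := by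
        rw [← Real.exp_nat_mul]
        congr 1
        push_cast
        ring
      rw [e1, e2]
      ring
    have step4 : ∀ ξ : EuclideanSpace ℝ (Fin d), F σ (σ • ξ)
        = σ ^ α * ((1 + ‖ξ‖ ^ 2) ^ (α / 2) * rexp (-(4 * π ^ 2) * (σ ^ 2 * ‖ξ‖ ^ 2))) := by
      intro ξ
      have hn : ‖σ • ξ‖ ^ 2 = σ ^ 2 * ‖ξ‖ ^ 2 := by
        rw [norm_smul]; simp [mul_pow, sq_abs]
      simp only [hF, hn]
      rw [show σ ^ 2 + σ ^ 2 * ‖ξ‖ ^ 2 = σ ^ 2 * (1 + ‖ξ‖ ^ 2) by ring,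
        Real.mul_rpow (sq_nonneg σ) (by positivity)]
      have : ((σ ^ 2 : ℝ)) ^ (α / 2) = σ ^ α := by
        rw [← Real.rpow_natCast σ 2, ← Real.rpow_mul hσ0.le]
        congr 1
        push_cast
        ring
      rw [this]; ring
    have step3 : ∫ ξ : EuclideanSpace ℝ (Fin d), F σ (σ • ξ) = (σ ^ d : ℝ)⁻¹ * G σ := by
      have h := MeasureTheory.Measure.integral_comp_smul_of_nonneg (μ := volume) (F σ) σ (hR := hσ0.le)
      rw [finrank_euclideanSpace_fin] at h
      rw [h, smul_eq_mul, hG]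
    have step5 : ∫ ξ : EuclideanSpace ℝ (Fin d), F σ (σ • ξ)
        = σ ^ α * ∫ ξ : EuclideanSpace ℝ (Fin d),
          (1 + ‖ξ‖ ^ 2) ^ (α / 2) * rexp (-(4 * π ^ 2) * (σ ^ 2 * ‖ξ‖ ^ 2)) := by
      simp_rw [step4]
      rw [MeasureTheory.integral_const_mul]
    have hσα : (0:ℝ) < σ ^ α := Real.rpow_pos_of_pos hσ0 α
    have step6 : ∫ ξ : EuclideanSpace ℝ (Fin d),
        (1 + ‖ξ‖ ^ 2) ^ (α / 2) * rexp (-(4 * π ^ 2) * (σ ^ 2 * ‖ξ‖ ^ 2))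
        = (σ ^ α)⁻¹ * ((σ ^ d : ℝ)⁻¹ * G σ) := by
      rw [← step3, step5, ← mul_assoc, inv_mul_cancel₀ hσα.ne', one_mul]
    rw [hN]
    simp_rw [step1]
    rw [MeasureTheory.integral_const_mul, step6]
    rw [show ((2 * π) ^ (d:ℝ) * (σ ^ d) ^ 2) * ((σ ^ α)⁻¹ * ((σ ^ d : ℝ)⁻¹ * G σ))
      = (2 * π) ^ (d:ℝ) * ((σ ^ d : ℝ) ^ 2 * ((σ ^ α)⁻¹ * (σ ^ d : ℝ)⁻¹)) * G σ by ring,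
      aux_rpow_alg hσ0 d α]
  have hNeq : ∀ l : Filter ℝ, ∀ h : l = nhdsWithin 0 (Set.Ioi 0), True := fun _ _ => trivial
  have hcongr : (fun σ : ℝ => (2 * π) ^ (d:ℝ) * σ ^ ((d:ℝ) - α) * G σ)
      =ᶠ[nhdsWithin 0 (Set.Ioi 0)] N :=
    Filter.eventuallyEq_of_mem self_mem_nhdsWithin fun σ hσ => (hkey σ hσ).symm
  have hG0 : G 0 = ∫ η : EuclideanSpace ℝ (Fin d),
      (‖η‖ ^ 2) ^ (α / 2) * rexp (-(4 * π ^ 2) * ‖η‖ ^ 2) := by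
    simp only [hG, hF]
    norm_num
  have hA : (0:ℝ) < (2 * π) ^ (d : ℝ) := Real.rpow_pos_of_pos (by positivity) _
  refine ⟨?_, ?_, ?_⟩
  · -- α < d
    intro hlt
    have hc : 0 < (d:ℝ) - α := by linarith
    have h1 : Tendsto (fun σ : ℝ => σ ^ ((d:ℝ) - α)) (nhdsWithin 0 (Set.Ioi 0)) (nhds 0) := by
      have := (Real.continuousAt_rpow_const 0 ((d:ℝ) - α) (Or.inr hc.le)).tendsto
      rw [Real.zero_rpow hc.ne'] at this
      exact this.mono_left nhdsWithin_le_nhds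
    have h2 := ((tendsto_const_nhds (x := (2 * π) ^ (d:ℝ))
      (f := nhdsWithin (0:ℝ) (Set.Ioi 0))).mul h1).mul hGlim
    rw [mul_zero, zero_mul] at h2
    exact h2.congr' hcongr
  · -- α = d
    intro heq
    have h1 : ∀ σ : ℝ, (2 * π) ^ (d:ℝ) * σ ^ ((d:ℝ) - α) * G σ
        = (2 * π) ^ (d:ℝ) * G σ := by
      intro σ
      rw [show (d:ℝ) - α = 0 by rw [heq]; ring, Real.rpow_zero, mul_one]
    have h2 : Tendsto (fun σ : ℝ => (2 * π) ^ (d:ℝ) * G σ) (nhdsWithin 0 (Set.Ioi 0))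
        (nhds ((2 * π) ^ (d:ℝ) * G 0)) := hGlim.const_mul _
    have h3 : (2 * π) ^ (d:ℝ) * G 0
        = (1 / 2) * (Nat.factorial (d - 1) : ℝ) * (2 * π) ^ (-(d : ℝ)) *
          (2 * π ^ ((d : ℝ) / 2) / Real.Gamma ((d : ℝ) / 2)) := by
      rw [hG0, heq]
      exact aux_value d hd
    have h4 := (h2.congr fun σ => (h1 σ).symm)
    rw [h3] at h4
    exact h4.congr' hcongr
  · -- d < α
    intro hgt
    have hG0pos : 0 < G 0 := by
      rw [MeasureTheory.integral_pos_iff_support_of_nonneg (hFnonneg 0)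
        (hFint 0 ⟨le_refl 0, zero_le_one⟩)]
      obtain ⟨x, hx⟩ := exists_ne (0 : EuclideanSpace ℝ (Fin d))
      refine lt_of_lt_of_le (isOpen_compl_singleton.measure_pos volume ⟨x, hx⟩)
        (measure_mono fun η hη => ?_)
      have hη0 : η ≠ (0 : EuclideanSpace ℝ (Fin d)) := hη
      have hn : 0 < ‖η‖ := norm_pos_iff.mpr hη0
      simp only [Function.mem_support, hF]
      exact ne_of_gt (mul_pos (Real.rpow_pos_of_pos (by nlinarith) _) (Real.exp_pos _))
    have h1 : Tendsto (fun σ : ℝ => σ ^ ((d:ℝ) - α)) (nhdsWithin 0 (Set.Ioi 0)) atTop := by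
      have h0 := (tendsto_rpow_atTop (y := α - (d:ℝ)) (by linarith)).comp
        tendsto_inv_nhdsGT_zero
      apply h0.congr'
      refine Filter.eventuallyEq_of_mem self_mem_nhdsWithin fun σ hσ => ?_
      have hσ0 : (0:ℝ) < σ := hσ
      show (σ⁻¹) ^ (α - (d:ℝ)) = σ ^ ((d:ℝ) - α)
      rw [Real.inv_rpow hσ0.le, ← Real.rpow_neg hσ0.le,
        show -(α - (d:ℝ)) = (d:ℝ) - α by ring]
    have h2 : Tendsto (fun σ : ℝ => (2 * π) ^ (d:ℝ) * G σ) (nhdsWithin 0 (Set.Ioi 0))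
        (nhds ((2 * π) ^ (d:ℝ) * G 0)) := hGlim.const_mul _
    have h3 : Tendsto (fun σ : ℝ => σ ^ ((d:ℝ) - α) * ((2 * π) ^ (d:ℝ) * G σ))
        (nhdsWithin 0 (Set.Ioi 0)) atTop :=
      Filter.Tendsto.atTop_mul_pos (mul_pos hA hG0pos) h1 h2
    apply h3.congr'
    refine Filter.eventuallyEq_of_mem self_mem_nhdsWithin fun σ hσ => ?_
    rw [hkey σ hσ]
    ring
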